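/- Fix n ≥ 2, α ∈ (0,n), m > 0, and β ∈ (0,1] with β < n − α. Then there exists a constant C, depending only on n, α, β, and m, such that for every Lebesgue measurable set E ⊂ ℝⁿ with |E| ≤ m and all x, y ∈ ℝⁿ, one has |v_E(x) − v_E(y)| ≤ C |x − y|^{β}. -/

import Mathlib

open MeasureTheory Metric Set Bornology

/-- The Riesz potential `v_E(x) = ∫_E |x-y|^{-α} dy` of a set `E ⊆ ℝⁿ`. -/
noncomputable def rieszPotential {n : ℕ} (α : ℝ) (E : Set (EuclideanSpace ℝ (Fin n)))
    (x : EuclideanSpace ℝ (Fin n)) : ℝ :=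
  ∫ y in E, ‖x - y‖ ^ (-α)

open scoped ENNReal


lemma exists_dyadic {t : ℝ} (h0 : 0 < t) (h1 : t < 1) :
    ∃ k : ℕ, (2:ℝ)⁻¹ ^ (k + 1) ≤ t ∧ t < (2:ℝ)⁻¹ ^ k := by
  have hex : ∃ j : ℕ, (2:ℝ)⁻¹ ^ j ≤ t := by
    obtain ⟨j, hj⟩ := exists_pow_lt_of_lt_one h0 (by norm_num : (2:ℝ)⁻¹ < 1)
    exact ⟨j, hj.le⟩
  classical
  set m := Nat.find hex with hm
  have hms : (2:ℝ)⁻¹ ^ m ≤ t := Nat.find_spec hex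
  have hm0 : m ≠ 0 := by
    intro h
    rw [h] at hms; simp at hms; linarith
  refine ⟨m - 1, ?_, ?_⟩
  · rw [Nat.sub_add_cancel (Nat.one_le_iff_ne_zero.mpr hm0)]; exact hms
  · have := Nat.find_min hex (m := m - 1) (by omega)
    push_neg at this
    linarith

lemma inv_two_pow_rpow (j : ℕ) : ((2:ℝ)⁻¹ ^ j : ℝ) = (2:ℝ) ^ (-(j:ℝ)) := by
  rw [inv_pow, ← Real.rpow_natCast (2:ℝ) j, ← Real.rpow_neg (by norm_num)]

lemma key_real (n : ℕ) (γ : ℝ) (k : ℕ) :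
    ((2:ℝ)⁻¹ ^ (k+1)) ^ (-γ) * ((2:ℝ)⁻¹ ^ k) ^ n
      = (2:ℝ) ^ γ * ((2:ℝ) ^ (γ - (n:ℝ))) ^ k := by
  rw [inv_two_pow_rpow (k+1), inv_two_pow_rpow k,
    ← Real.rpow_natCast ((2:ℝ) ^ (-(k:ℝ))) n,
    ← Real.rpow_natCast ((2:ℝ) ^ (γ - (n:ℝ))) k,
    ← Real.rpow_mul (by norm_num), ← Real.rpow_mul (by norm_num),
    ← Real.rpow_mul (by norm_num),
    ← Real.rpow_add (by norm_num), ← Real.rpow_add (by norm_num)]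
  push_cast
  ring_nf

lemma lintegral_ball_rpow_le {n : ℕ} (hn : 0 < n) {γ : ℝ} (hγ0 : 0 < γ) (hγ : γ < n)
    (x : EuclideanSpace ℝ (Fin n)) :
    ∫⁻ z in ball x 1, ENNReal.ofReal (‖x - z‖ ^ (-γ)) ≤
      ENNReal.ofReal ((2:ℝ) ^ γ) * volume (ball (0 : EuclideanSpace ℝ (Fin n)) 1) *
        (1 - ENNReal.ofReal ((2:ℝ) ^ (γ - (n:ℝ))))⁻¹ := by
  haveI : Nontrivial (EuclideanSpace ℝ (Fin n)) :=
    Module.nontrivial_of_finrank_pos (R := ℝ) (by rw [finrank_euclideanSpace_fin]; exact hn)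
  set V := volume (ball (0 : EuclideanSpace ℝ (Fin n)) 1) with hV
  set ρ : ℝ≥0∞ := ENNReal.ofReal ((2:ℝ) ^ (γ - (n:ℝ))) with hρ
  set A : ℕ → Set (EuclideanSpace ℝ (Fin n)) := fun k => ball x ((2:ℝ)⁻¹ ^ k) \ ball x ((2:ℝ)⁻¹ ^ (k+1)) with hA
  have hsub : ball x 1 ⊆ {x} ∪ ⋃ k, A k := by
    intro z hz
    by_cases hzx : z = x
    · exact Or.inl (by simp [hzx])
    · refine Or.inr ?_
      obtain ⟨k, hk1, hk2⟩ := exists_dyadic (dist_pos.mpr hzx) (mem_ball.mp hz)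
      exact mem_iUnion.mpr ⟨k, mem_ball.mpr hk2,
        fun h => absurd (mem_ball.mp h) (not_lt.mpr hk1)⟩
  have hterm : ∀ k : ℕ, (∫⁻ z in A k, ENNReal.ofReal (‖x - z‖ ^ (-γ)))
      ≤ ENNReal.ofReal ((2:ℝ) ^ γ) * V * ρ ^ k := by
    intro k
    have hbase : (0:ℝ) < (2:ℝ)⁻¹ ^ (k+1) := by positivity
    have h1 : (∫⁻ z in A k, ENNReal.ofReal (‖x - z‖ ^ (-γ)))
        ≤ ∫⁻ _z in A k, ENNReal.ofReal (((2:ℝ)⁻¹ ^ (k+1)) ^ (-γ)) := by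
      refine setLIntegral_mono measurable_const (fun z hz => ?_)
      refine ENNReal.ofReal_le_ofReal ?_
      have hzd : (2:ℝ)⁻¹ ^ (k+1) ≤ ‖x - z‖ := by
        have := hz.2
        rw [mem_ball, not_lt] at this
        calc (2:ℝ)⁻¹ ^ (k+1) ≤ dist z x := this
        _ = ‖x - z‖ := dist_eq_norm' z x
      exact Real.rpow_le_rpow_of_nonpos hbase hzd (by linarith)
    have h2 : (∫⁻ _z in A k, ENNReal.ofReal (((2:ℝ)⁻¹ ^ (k+1)) ^ (-γ)))
        = ENNReal.ofReal (((2:ℝ)⁻¹ ^ (k+1)) ^ (-γ)) * volume (A k) := setLIntegral_const _ _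
    have h3 : volume (A k) ≤ ENNReal.ofReal (((2:ℝ)⁻¹ ^ k) ^ n) * V := by
      calc volume (A k) ≤ volume (ball x ((2:ℝ)⁻¹ ^ k)) := measure_mono diff_subset
      _ = ENNReal.ofReal (((2:ℝ)⁻¹ ^ k) ^ Module.finrank ℝ (EuclideanSpace ℝ (Fin n))) * V :=
          Measure.addHaar_ball volume x (by positivity)
      _ = ENNReal.ofReal (((2:ℝ)⁻¹ ^ k) ^ n) * V := by rw [finrank_euclideanSpace_fin]
    calc (∫⁻ z in A k, ENNReal.ofReal (‖x - z‖ ^ (-γ)))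
        ≤ ENNReal.ofReal (((2:ℝ)⁻¹ ^ (k+1)) ^ (-γ)) * volume (A k) := h1.trans_eq h2
      _ ≤ ENNReal.ofReal (((2:ℝ)⁻¹ ^ (k+1)) ^ (-γ)) * (ENNReal.ofReal (((2:ℝ)⁻¹ ^ k) ^ n) * V) :=
          mul_le_mul_right h3 _
      _ = ENNReal.ofReal (((2:ℝ)⁻¹ ^ (k+1)) ^ (-γ) * ((2:ℝ)⁻¹ ^ k) ^ n) * V := by
          rw [← mul_assoc, ← ENNReal.ofReal_mul (by positivity)]
      _ = ENNReal.ofReal ((2:ℝ) ^ γ * ((2:ℝ) ^ (γ - (n:ℝ))) ^ k) * V := by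
          rw [key_real]
      _ = ENNReal.ofReal ((2:ℝ) ^ γ) * V * ρ ^ k := by
          rw [ENNReal.ofReal_mul (by positivity), ENNReal.ofReal_pow (by positivity)]
          ring
  calc (∫⁻ z in ball x 1, ENNReal.ofReal (‖x - z‖ ^ (-γ)))
      ≤ ∫⁻ z in ({x} ∪ ⋃ k, A k), ENNReal.ofReal (‖x - z‖ ^ (-γ)) :=
        lintegral_mono_set hsub
    _ ≤ (∫⁻ z in ({x} : Set (EuclideanSpace ℝ (Fin n))), ENNReal.ofReal (‖x - z‖ ^ (-γ)))
        + ∫⁻ z in (⋃ k, A k), ENNReal.ofReal (‖x - z‖ ^ (-γ)) := lintegral_union_le _ _ _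
    _ = ∫⁻ z in (⋃ k, A k), ENNReal.ofReal (‖x - z‖ ^ (-γ)) := by
        rw [setLIntegral_measure_zero _ _ (measure_singleton x), zero_add]
    _ ≤ ∑' k, ∫⁻ z in A k, ENNReal.ofReal (‖x - z‖ ^ (-γ)) := lintegral_iUnion_le _ _
    _ ≤ ∑' k, ENNReal.ofReal ((2:ℝ) ^ γ) * V * ρ ^ k := ENNReal.tsum_le_tsum hterm
    _ = ENNReal.ofReal ((2:ℝ) ^ γ) * V * (1 - ρ)⁻¹ := by
        rw [ENNReal.tsum_mul_left, ENNReal.tsum_geometric]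

noncomputable def rieszBound (n : ℕ) (γ : ℝ) : ℝ≥0∞ :=
  ENNReal.ofReal ((2:ℝ) ^ γ) * volume (ball (0 : EuclideanSpace ℝ (Fin n)) 1) *
    (1 - ENNReal.ofReal ((2:ℝ) ^ (γ - (n:ℝ))))⁻¹

lemma rieszBound_ne_top {n : ℕ} {γ : ℝ} (hγ : γ < n) : rieszBound n γ ≠ ⊤ := by
  have hρ : ENNReal.ofReal ((2:ℝ) ^ (γ - (n:ℝ))) < 1 := by
    rw [show (1:ℝ≥0∞) = ENNReal.ofReal 1 by simp]
    exact ENNReal.ofReal_lt_ofReal_iff_of_nonneg (by positivity) |>.mpr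
      (Real.rpow_lt_one_of_one_lt_of_neg one_lt_two (by linarith))
  have h1 : (1 - ENNReal.ofReal ((2:ℝ) ^ (γ - (n:ℝ))))⁻¹ ≠ ⊤ := by
    rw [ENNReal.inv_ne_top]
    exact (tsub_pos_iff_lt.mpr hρ).ne'
  exact ENNReal.mul_ne_top (ENNReal.mul_ne_top ENNReal.ofReal_ne_top
    measure_ball_lt_top.ne) h1

lemma riesz_nonneg {n : ℕ} (x : EuclideanSpace ℝ (Fin n)) (γ : ℝ) (z : EuclideanSpace ℝ (Fin n)) :
    0 ≤ ‖x - z‖ ^ (-γ) := Real.rpow_nonneg (norm_nonneg _) _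

lemma integrableOn_riesz {n : ℕ} (hn : 0 < n) {γ : ℝ} (hγ0 : 0 < γ) (hγ : γ < n)
    (x : EuclideanSpace ℝ (Fin n)) {E : Set (EuclideanSpace ℝ (Fin n))}
    (hE : MeasurableSet E) (hEfin : volume E ≠ ⊤) :
    IntegrableOn (fun z => ‖x - z‖ ^ (-γ)) E := by
  have hmeas : Measurable fun z : EuclideanSpace ℝ (Fin n) => ‖x - z‖ ^ (-γ) := by fun_prop
  have hball : IntegrableOn (fun z => ‖x - z‖ ^ (-γ)) (ball x 1) := by
    refine ⟨hmeas.aestronglyMeasurable.restrict, ?_⟩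
    rw [hasFiniteIntegral_iff_ofReal (Filter.Eventually.of_forall (riesz_nonneg x γ))]
    exact lt_of_le_of_lt (lintegral_ball_rpow_le hn hγ0 hγ x)
      (lt_of_le_of_ne le_top (rieszBound_ne_top hγ))
  have houter : IntegrableOn (fun z => ‖x - z‖ ^ (-γ)) (E \ ball x 1) := by
    refine Measure.integrableOn_of_bounded
      (ne_top_of_le_ne_top hEfin (measure_mono diff_subset))
      hmeas.aestronglyMeasurable (M := 1) ?_
    refine (ae_restrict_iff' (hE.diff measurableSet_ball)).mpr
      (Filter.Eventually.of_forall fun z hz => ?_)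
    rw [Real.norm_eq_abs, abs_of_nonneg (riesz_nonneg x γ z)]
    refine Real.rpow_le_one_of_one_le_of_nonpos ?_ (by linarith)
    have : ¬ dist z x < 1 := fun h => hz.2 (mem_ball.mpr h)
    rw [dist_eq_norm'] at this
    linarith [not_lt.mp this]
  have h2 : IntegrableOn (fun z => ‖x - z‖ ^ (-γ)) (E ∩ ball x 1) :=
    hball.mono_set inter_subset_right
  have := h2.union houter
  rwa [inter_union_diff] at this

lemma setIntegral_riesz_le {n : ℕ} (hn : 0 < n) {γ : ℝ} (hγ0 : 0 < γ) (hγ : γ < n)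
    {m : ℝ} (hm : 0 ≤ m) (x : EuclideanSpace ℝ (Fin n)) {E : Set (EuclideanSpace ℝ (Fin n))}
    (hE : MeasurableSet E) (hEm : volume E ≤ ENNReal.ofReal m) :
    ∫ z in E, ‖x - z‖ ^ (-γ) ≤ (rieszBound n γ).toReal + m := by
  have hEfin : volume E ≠ ⊤ := ne_top_of_le_ne_top ENNReal.ofReal_ne_top hEm
  have hInt := integrableOn_riesz hn hγ0 hγ x hE hEfin
  rw [← integral_inter_add_diff measurableSet_ball hInt]
  have h1 : ∫ z in E ∩ ball x 1, ‖x - z‖ ^ (-γ) ≤ (rieszBound n γ).toReal := by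
    rw [integral_eq_lintegral_of_nonneg_ae (Filter.Eventually.of_forall (riesz_nonneg x γ))
      ((by fun_prop :
        Measurable fun z : EuclideanSpace ℝ (Fin n) =>
          ‖x - z‖ ^ (-γ)).aestronglyMeasurable.restrict)]
    refine ENNReal.toReal_mono (rieszBound_ne_top hγ) ?_
    exact le_trans (lintegral_mono_set inter_subset_right) (lintegral_ball_rpow_le hn hγ0 hγ x)
  have h2 : ∫ z in E \ ball x 1, ‖x - z‖ ^ (-γ) ≤ m := by
    have hintc : IntegrableOn (fun _ : EuclideanSpace ℝ (Fin n) => (1:ℝ)) (E \ ball x 1) :=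
      (integrableOn_const_iff (C := (1:ℝ))).mpr (Or.inr (lt_of_le_of_lt
        (le_trans (measure_mono diff_subset) hEm) ENNReal.ofReal_lt_top))
    calc ∫ z in E \ ball x 1, ‖x - z‖ ^ (-γ) ≤ ∫ _z in E \ ball x 1, (1:ℝ) := by
          refine setIntegral_mono_on (hInt.mono_set diff_subset) hintc
            (hE.diff measurableSet_ball) fun z hz => ?_
          refine Real.rpow_le_one_of_one_le_of_nonpos ?_ (by linarith)
          have : ¬ dist z x < 1 := fun h => hz.2 (mem_ball.mpr h)
          rw [dist_eq_norm'] at this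
          linarith [not_lt.mp this]
      _ = (volume (E \ ball x 1)).toReal := by simp [Measure.real]
      _ ≤ m := ENNReal.toReal_le_of_le_ofReal hm (le_trans (measure_mono diff_subset) hEm)
  linarith

lemma abs_rpow_neg_sub_le {α : ℝ} (hα : 0 < α) {c a b : ℝ} (hc : 0 < c)
    (ha : c ≤ a) (hb : c ≤ b) :
    |a ^ (-α) - b ^ (-α)| ≤ α * c ^ (-α - 1) * |a - b| := by
  have hderiv : ∀ t ∈ Ici c,
      HasDerivWithinAt (fun s : ℝ => s ^ (-α)) ((-α) * t ^ (-α - 1)) (Ici c) t :=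
    fun t ht =>
      (Real.hasDerivAt_rpow_const (Or.inl (lt_of_lt_of_le hc ht).ne')).hasDerivWithinAt
  have hbound : ∀ t ∈ Ici c, ‖(-α) * t ^ (-α - 1)‖ ≤ α * c ^ (-α - 1) := by
    intro t ht
    rw [norm_mul, Real.norm_eq_abs, Real.norm_eq_abs, abs_neg, abs_of_pos hα,
      abs_of_nonneg (Real.rpow_nonneg (le_trans hc.le ht) _)]
    exact mul_le_mul_of_nonneg_left
      (Real.rpow_le_rpow_of_nonpos hc ht (by linarith)) hα.le
  have := (convex_Ici c).norm_image_sub_le_of_norm_hasDerivWithin_le hderiv hbound hb ha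
  simpa [Real.norm_eq_abs] using this

set_option maxHeartbeats 1000000 in
/-- Uniform Hölder estimate for Riesz potentials: for `β ∈ (0,1]` with `β < n − α`, there is a
constant `C = C(n, α, β, m)` such that `|v_E(x) − v_E(y)| ≤ C |x − y|^β` for every measurable
set `E` of measure at most `m` and all `x, y ∈ ℝⁿ`. -/
theorem rieszPotential_holder
    (n : ℕ) (hn : 2 ≤ n) (α : ℝ) (hα₀ : 0 < α) (hα₁ : α < n)
    (m : ℝ) (hm : 0 < m) (β : ℝ) (hβ₀ : 0 < β) (hβ₁ : β ≤ 1) (hβα : β < (n : ℝ) - α) :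
    ∃ C : ℝ, ∀ E : Set (EuclideanSpace ℝ (Fin n)), MeasurableSet E →
      volume E ≤ ENNReal.ofReal m →
      ∀ x y : EuclideanSpace ℝ (Fin n),
        |rieszPotential α E x - rieszPotential α E y| ≤ C * ‖x - y‖ ^ β := by
  have hn0 : 0 < n := by omega
  set γ : ℝ := α + β with hγdef
  have hγ0 : 0 < γ := by positivity
  have hγn : γ < n := by rw [hγdef]; linarith
  set K : ℝ := (rieszBound n γ).toReal + m with hKdef
  have hK0 : 0 ≤ K := by
    have : (0:ℝ) ≤ (rieszBound n γ).toReal := ENNReal.toReal_nonneg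
    rw [hKdef]; linarith
  refine ⟨((2:ℝ) ^ β + (3:ℝ) ^ β + α * (2:ℝ) ^ (α + β)) * K, fun E hE hEm x y => ?_⟩
  by_cases hxy : x = y
  · subst hxy
    rw [sub_self, abs_zero, sub_self, norm_zero, Real.zero_rpow hβ₀.ne', mul_zero]
  set r : ℝ := ‖x - y‖ with hrdef
  have hr : 0 < r := by
    rw [hrdef, norm_pos_iff]
    exact sub_ne_zero_of_ne hxy
  have hEfin : volume E ≠ ⊤ := ne_top_of_le_ne_top ENNReal.ofReal_ne_top hEm
  have hIf : IntegrableOn (fun z => ‖x - z‖ ^ (-α)) E := by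
    exact integrableOn_riesz hn0 hα₀ hα₁ x hE hEfin
  have hIg : IntegrableOn (fun z => ‖y - z‖ ^ (-α)) E := by
    exact integrableOn_riesz hn0 hα₀ hα₁ y hE hEfin
  have hIh : IntegrableOn (fun z => ‖x - z‖ ^ (-γ)) E :=
    integrableOn_riesz hn0 hγ0 hγn x hE hEfin
  have hIh' : IntegrableOn (fun z => ‖y - z‖ ^ (-γ)) E :=
    integrableOn_riesz hn0 hγ0 hγn y hE hEfin
  have hKx : ∫ z in E, ‖x - z‖ ^ (-γ) ≤ K := setIntegral_riesz_le hn0 hγ0 hγn hm.le x hE hEm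
  have hKy : ∫ z in E, ‖y - z‖ ^ (-γ) ≤ K := setIntegral_riesz_le hn0 hγ0 hγn hm.le y hE hEm
  set B : Set (EuclideanSpace ℝ (Fin n)) := closedBall x (2*r) with hBdef
  -- split
  have hIfg : IntegrableOn (fun z => ‖x - z‖ ^ (-α) - ‖y - z‖ ^ (-α)) E := hIf.sub hIg
  have hsplit : rieszPotential α E x - rieszPotential α E y
      = (∫ z in E ∩ B, (‖x - z‖ ^ (-α) - ‖y - z‖ ^ (-α)))
        + ∫ z in E \ B, (‖x - z‖ ^ (-α) - ‖y - z‖ ^ (-α)) := by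
    have h0 := integral_inter_add_diff (s := E) (t := B) (μ := volume)
      measurableSet_closedBall hIfg
    have h1 : rieszPotential α E x - rieszPotential α E y
        = ∫ z in E, (‖x - z‖ ^ (-α) - ‖y - z‖ ^ (-α)) := (integral_sub hIf hIg).symm
    rw [h1, ← h0]
  -- near part for x
  have hnearx : ∫ z in E ∩ B, ‖x - z‖ ^ (-α) ≤ (2:ℝ) ^ β * r ^ β * K := by
    have step1 : ∫ z in E ∩ B, ‖x - z‖ ^ (-α)
        ≤ ∫ z in E ∩ B, (2*r) ^ β * ‖x - z‖ ^ (-γ) := by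
      refine setIntegral_mono_on (hIf.mono_set inter_subset_left)
        ((hIh.mono_set inter_subset_left).const_mul _)
        (hE.inter measurableSet_closedBall) fun z hz => ?_
      by_cases hd : ‖x - z‖ = 0
      · rw [hd, Real.zero_rpow (by simpa using hα₀.ne'),
          Real.zero_rpow (by simpa using hγ0.ne'), mul_zero]
      · have hd0 : 0 < ‖x - z‖ := (norm_nonneg _).lt_of_ne' hd
        have hle : ‖x - z‖ ≤ 2*r := by
          have := hz.2
          rw [hBdef, mem_closedBall, dist_eq_norm'] at this
          exact this
        calc ‖x - z‖ ^ (-α) = ‖x - z‖ ^ β * ‖x - z‖ ^ (-γ) := by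
              rw [← Real.rpow_add hd0]; congr 1; rw [hγdef]; ring
          _ ≤ (2*r) ^ β * ‖x - z‖ ^ (-γ) :=
              mul_le_mul_of_nonneg_right
                (Real.rpow_le_rpow (norm_nonneg _) hle hβ₀.le)
                (Real.rpow_nonneg (norm_nonneg _) _)
    have step2 : ∫ z in E ∩ B, (2*r) ^ β * ‖x - z‖ ^ (-γ)
        = (2*r) ^ β * ∫ z in E ∩ B, ‖x - z‖ ^ (-γ) := integral_const_mul _ _
    have step3 : ∫ z in E ∩ B, ‖x - z‖ ^ (-γ) ≤ ∫ z in E, ‖x - z‖ ^ (-γ) :=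
      setIntegral_mono_set hIh (Filter.Eventually.of_forall (riesz_nonneg x γ))
        (HasSubset.Subset.eventuallyLE inter_subset_left)
    have : ∫ z in E ∩ B, ‖x - z‖ ^ (-α) ≤ (2*r) ^ β * K := by
      rw [step2] at step1
      refine le_trans step1 (mul_le_mul_of_nonneg_left (le_trans step3 hKx) (by positivity))
    rwa [Real.mul_rpow (by norm_num) hr.le] at this
  -- near part for y
  have hneary : ∫ z in E ∩ B, ‖y - z‖ ^ (-α) ≤ (3:ℝ) ^ β * r ^ β * K := by
    have step1 : ∫ z in E ∩ B, ‖y - z‖ ^ (-α)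
        ≤ ∫ z in E ∩ B, (3*r) ^ β * ‖y - z‖ ^ (-γ) := by
      refine setIntegral_mono_on (hIg.mono_set inter_subset_left)
        ((hIh'.mono_set inter_subset_left).const_mul _)
        (hE.inter measurableSet_closedBall) fun z hz => ?_
      by_cases hd : ‖y - z‖ = 0
      · rw [hd, Real.zero_rpow (by simpa using hα₀.ne'),
          Real.zero_rpow (by simpa using hγ0.ne'), mul_zero]
      · have hd0 : 0 < ‖y - z‖ := (norm_nonneg _).lt_of_ne' hd
        have hle : ‖y - z‖ ≤ 3*r := by
          have h1 : ‖x - z‖ ≤ 2*r := by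
            have := hz.2
            rw [hBdef, mem_closedBall, dist_eq_norm'] at this
            exact this
          have h2 : ‖y - z‖ ≤ ‖y - x‖ + ‖x - z‖ := norm_sub_le_norm_sub_add_norm_sub y x z
          have h3 : ‖y - x‖ = r := by rw [hrdef, norm_sub_rev]
          linarith
        calc ‖y - z‖ ^ (-α) = ‖y - z‖ ^ β * ‖y - z‖ ^ (-γ) := by
              rw [← Real.rpow_add hd0]; congr 1; rw [hγdef]; ring
          _ ≤ (3*r) ^ β * ‖y - z‖ ^ (-γ) :=
              mul_le_mul_of_nonneg_right
                (Real.rpow_le_rpow (norm_nonneg _) hle hβ₀.le)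
                (Real.rpow_nonneg (norm_nonneg _) _)
    have step2 : ∫ z in E ∩ B, (3*r) ^ β * ‖y - z‖ ^ (-γ)
        = (3*r) ^ β * ∫ z in E ∩ B, ‖y - z‖ ^ (-γ) := integral_const_mul _ _
    have step3 : ∫ z in E ∩ B, ‖y - z‖ ^ (-γ) ≤ ∫ z in E, ‖y - z‖ ^ (-γ) :=
      setIntegral_mono_set hIh' (Filter.Eventually.of_forall (riesz_nonneg y γ))
        (HasSubset.Subset.eventuallyLE inter_subset_left)
    have : ∫ z in E ∩ B, ‖y - z‖ ^ (-α) ≤ (3*r) ^ β * K := by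
      rw [step2] at step1
      refine le_trans step1 (mul_le_mul_of_nonneg_left (le_trans step3 hKy) (by positivity))
    rwa [Real.mul_rpow (by norm_num) hr.le] at this
  -- far part
  have hfar : |∫ z in E \ B, (‖x - z‖ ^ (-α) - ‖y - z‖ ^ (-α))|
      ≤ α * (2:ℝ) ^ (α + β) * r ^ β * K := by
    have habs : |∫ z in E \ B, (‖x - z‖ ^ (-α) - ‖y - z‖ ^ (-α))|
        ≤ ∫ z in E \ B, |‖x - z‖ ^ (-α) - ‖y - z‖ ^ (-α)| :=
      by simpa [Real.norm_eq_abs] using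
        norm_integral_le_integral_norm
          (μ := volume.restrict (E \ B))
          (fun z => ‖x - z‖ ^ (-α) - ‖y - z‖ ^ (-α))
    have step1 : ∫ z in E \ B, |‖x - z‖ ^ (-α) - ‖y - z‖ ^ (-α)|
        ≤ ∫ z in E \ B, (α * (2:ℝ) ^ (α + β) * r ^ β) * ‖x - z‖ ^ (-γ) := by
      refine setIntegral_mono_on
        (((hIf.mono_set diff_subset).sub (hIg.mono_set diff_subset)).abs)
        ((hIh.mono_set diff_subset).const_mul _)
        (hE.diff measurableSet_closedBall) fun z hz => ?_
      have hd : 2*r < ‖x - z‖ := by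
        have := hz.2
        rw [hBdef, mem_closedBall, dist_eq_norm'] at this
        exact lt_of_not_ge this
      have hd0 : 0 < ‖x - z‖ := lt_trans (by positivity) hd
      have hdiff : |‖x - z‖ - ‖y - z‖| ≤ r := by
        have := abs_norm_sub_norm_le (x - z) (y - z)
        rwa [sub_sub_sub_cancel_right, ← hrdef] at this
      have he : ‖x - z‖/2 ≤ ‖y - z‖ := by
        have h1 : ‖x - z‖ - ‖y - z‖ ≤ r := (abs_le.mp hdiff).2
        linarith
      have h1 : |‖x - z‖ ^ (-α) - ‖y - z‖ ^ (-α)|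
          ≤ α * (‖x - z‖/2) ^ (-α - 1) * |‖x - z‖ - ‖y - z‖| :=
        abs_rpow_neg_sub_le hα₀ (by positivity) (by linarith) he
      have h2 : α * (‖x - z‖/2) ^ (-α - 1) * |‖x - z‖ - ‖y - z‖|
          ≤ α * (‖x - z‖/2) ^ (-α - 1) * r :=
        mul_le_mul_of_nonneg_left hdiff (by positivity)
      refine le_trans h1 (le_trans h2 ?_)
      -- key pointwise computation
      have e1 : (‖x - z‖/2) ^ (-α - 1) = (2:ℝ) ^ (α + 1) * ‖x - z‖ ^ (-α - 1) := by
        rw [div_eq_mul_inv, Real.mul_rpow hd0.le (by norm_num),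
          Real.inv_rpow (by norm_num), ← Real.rpow_neg (by norm_num)]
        ring_nf
      have e2 : ‖x - z‖ ^ (-α - 1) = ‖x - z‖ ^ (β - 1) * ‖x - z‖ ^ (-γ) := by
        rw [← Real.rpow_add hd0]; congr 1; rw [hγdef]; ring
      have e3 : ‖x - z‖ ^ (β - 1) ≤ (2*r) ^ (β - 1) :=
        Real.rpow_le_rpow_of_nonpos (by positivity) hd.le (by linarith)
      have e4 : (2*r) ^ (β - 1) = (2:ℝ) ^ (β - 1) * r ^ (β - 1) :=
        Real.mul_rpow (by norm_num) hr.le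
      have e5 : r ^ (β - 1) * r = r ^ β := by
        nth_rewrite 2 [← Real.rpow_one r]
        rw [← Real.rpow_add hr]; ring_nf
      have e6 : (2:ℝ) ^ (α + 1) * (2:ℝ) ^ (β - 1) = (2:ℝ) ^ (α + β) := by
        rw [← Real.rpow_add (by norm_num)]; ring_nf
      calc α * (‖x - z‖/2) ^ (-α - 1) * r
          = α * (2:ℝ) ^ (α + 1) * (‖x - z‖ ^ (β - 1) * ‖x - z‖ ^ (-γ)) * r := by
            rw [e1, e2]; ring
        _ ≤ α * (2:ℝ) ^ (α + 1) * ((2*r) ^ (β - 1) * ‖x - z‖ ^ (-γ)) * r := by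
            have hrp : (0:ℝ) ≤ ‖x - z‖ ^ (-γ) := Real.rpow_nonneg (norm_nonneg _) _
            have := mul_le_mul_of_nonneg_right e3 hrp
            have h2p : (0:ℝ) ≤ α * (2:ℝ) ^ (α + 1) := by positivity
            nlinarith [mul_le_mul_of_nonneg_left
              (mul_le_mul_of_nonneg_right this hr.le) h2p]
        _ = (α * (2:ℝ) ^ (α + β) * r ^ β) * ‖x - z‖ ^ (-γ) := by
            rw [e4, ← e5, ← e6]; ring
    have step2 : ∫ z in E \ B, (α * (2:ℝ) ^ (α + β) * r ^ β) * ‖x - z‖ ^ (-γ)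
        = (α * (2:ℝ) ^ (α + β) * r ^ β) * ∫ z in E \ B, ‖x - z‖ ^ (-γ) :=
      integral_const_mul _ _
    have step3 : ∫ z in E \ B, ‖x - z‖ ^ (-γ) ≤ ∫ z in E, ‖x - z‖ ^ (-γ) :=
      setIntegral_mono_set hIh (Filter.Eventually.of_forall (riesz_nonneg x γ))
        (HasSubset.Subset.eventuallyLE diff_subset)
    calc |∫ z in E \ B, (‖x - z‖ ^ (-α) - ‖y - z‖ ^ (-α))|
        ≤ ∫ z in E \ B, (α * (2:ℝ) ^ (α + β) * r ^ β) * ‖x - z‖ ^ (-γ) :=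
          le_trans habs step1
      _ = (α * (2:ℝ) ^ (α + β) * r ^ β) * ∫ z in E \ B, ‖x - z‖ ^ (-γ) := step2
      _ ≤ (α * (2:ℝ) ^ (α + β) * r ^ β) * K := by
          refine mul_le_mul_of_nonneg_left (le_trans step3 hKx) (by positivity)
      _ = α * (2:ℝ) ^ (α + β) * r ^ β * K := by ring
  -- combine
  have hnear : |∫ z in E ∩ B, (‖x - z‖ ^ (-α) - ‖y - z‖ ^ (-α))|
      ≤ (2:ℝ) ^ β * r ^ β * K + (3:ℝ) ^ β * r ^ β * K := by
    rw [integral_sub (hIf.mono_set inter_subset_left) (hIg.mono_set inter_subset_left)]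
    have hax : 0 ≤ ∫ z in E ∩ B, ‖x - z‖ ^ (-α) :=
      integral_nonneg (riesz_nonneg x α)
    have hay : 0 ≤ ∫ z in E ∩ B, ‖y - z‖ ^ (-α) :=
      integral_nonneg (riesz_nonneg y α)
    have := abs_sub (∫ z in E ∩ B, ‖x - z‖ ^ (-α)) (∫ z in E ∩ B, ‖y - z‖ ^ (-α))
    rw [abs_of_nonneg hax, abs_of_nonneg hay] at this
    exact le_trans this (add_le_add hnearx hneary)
  calc |rieszPotential α E x - rieszPotential α E y|
      ≤ |∫ z in E ∩ B, (‖x - z‖ ^ (-α) - ‖y - z‖ ^ (-α))|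
        + |∫ z in E \ B, (‖x - z‖ ^ (-α) - ‖y - z‖ ^ (-α))| := by
        rw [hsplit]; exact abs_add_le _ _
    _ ≤ ((2:ℝ) ^ β * r ^ β * K + (3:ℝ) ^ β * r ^ β * K) + α * (2:ℝ) ^ (α + β) * r ^ β * K :=
        add_le_add hnear hfar
    _ = ((2:ℝ) ^ β + (3:ℝ) ^ β + α * (2:ℝ) ^ (α + β)) * K * r ^ β := by ring
    _ = ((2:ℝ) ^ β + (3:ℝ) ^ β + α * (2:ℝ) ^ (α + β)) * K * ‖x - y‖ ^ β := by rw [hrdef]
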